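/- Let Γ and Λ be finite types, and let M be a Post–Turing machine (Turing.TM0.Machine Γ Λ) that halts on every input tape lying in the support of any of the distributions below. For each input tape x, let A(x) ∈ Finset (Λ × Γ) be the set of (state, head-symbol) pairs visited during M's (halting) run on x, and let (D_n)_{n≥1} be a sequence of probability mass functions on input tapes. Then for every ε, δ ∈ (0,1) there exist n₀ ∈ ℕ and m ∈ ℕ such that, drawing m independent samples from each of D_1, …, D_{n₀} and setting Â = the union of A(x) over all drawn samples x, with probability at least 1 − δ the following holds: for every n ≥ n₀, Pr_{x∼D_n}[Turing.TM0.eval M_Â x = Turing.TM0.eval M x] > 1 − ε, where M_Â is defined by M_Â q s = M q s if (q, s) ∈ Â and none otherwise. -/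

import Mathlib

open scoped ENNReal Classical

/-- The restriction of a Post–Turing machine `M` to a finite partial lookup table `Ahat` of
(state, symbol) pairs: it behaves like `M` on pairs in `Ahat` and halts otherwise. -/
noncomputable def restrictMachine {Γ Λ : Type*} [Inhabited Λ]
    (M : Turing.TM0.Machine Γ Λ) (Ahat : Finset (Λ × Γ)) : Turing.TM0.Machine Γ Λ :=
  fun q s => if (q, s) ∈ Ahat then M q s else none

/-- Product formula for `tsum` over a finite pi type with `ℝ≥0∞` weights. -/
lemma tsum_prod_pi {β : Type*} : ∀ (n : ℕ) (w : Fin n → β → ℝ≥0∞),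
    ∑' f : Fin n → β, ∏ i, w i (f i) = ∏ i, ∑' b : β, w i b := by
  intro n
  induction n with
  | zero =>
    intro w
    rw [tsum_eq_single (fun i : Fin 0 => i.elim0)
      (fun f hf => absurd (funext fun i => i.elim0) hf)]
    simp
  | succ n ih =>
    intro w
    rw [← (Fin.consEquiv (fun _ => β)).tsum_eq, ENNReal.tsum_prod']
    have key : ∀ (a : β) (g : Fin n → β),
        (∏ i, w i ((Fin.consEquiv (fun _ => β)) (a, g) i)) =
          w 0 a * ∏ i : Fin n, w i.succ (g i) := by
      intro a g
      rw [Fin.prod_univ_succ]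
      simp [Fin.consEquiv]
    calc ∑' (a : β) (g : Fin n → β), ∏ i, w i ((Fin.consEquiv (fun _ => β)) (a, g) i)
        = ∑' (a : β) (g : Fin n → β), w 0 a * ∏ i : Fin n, w i.succ (g i) :=
          tsum_congr fun a => tsum_congr fun g => key a g
      _ = (∑' a : β, w 0 a) * ∑' g : Fin n → β, ∏ i : Fin n, w i.succ (g i) := by
          simp_rw [ENNReal.tsum_mul_left]
          rw [ENNReal.tsum_mul_right]
      _ = ∏ i, ∑' b : β, w i b := by
          rw [ih fun i => w i.succ, Fin.prod_univ_succ]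

/-- If `M` halts on `x` and `Ahat` contains all (state, head symbol) pairs of configurations
reachable from the initial configuration on `x`, then the restricted machine computes the
same value as `M` on `x`. -/
lemma eval_restrict_eq {Γ Λ : Type*} [Inhabited Γ] [Inhabited Λ]
    (M : Turing.TM0.Machine Γ Λ) (Ahat : Finset (Λ × Γ)) (x : List Γ)
    (hdom : (Turing.TM0.eval M x).Dom)
    (hsub : ∀ c : Turing.TM0.Cfg Γ Λ, Turing.TM0.Reaches M (Turing.TM0.init x) c →
      (c.q, c.Tape.head) ∈ Ahat) :
    Turing.TM0.eval (restrictMachine M Ahat) x = Turing.TM0.eval M x := by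
  have key : ∀ c : Turing.TM0.Cfg Γ Λ, Turing.TM0.Reaches M (Turing.TM0.init x) c →
      Turing.TM0.step (restrictMachine M Ahat) c = Turing.TM0.step M c := by
    intro c hc
    obtain ⟨q, T⟩ := c
    have hm : (q, T.head) ∈ Ahat := hsub _ hc
    simp [Turing.TM0.step, restrictMachine, hm]
  have hd : (StateTransition.eval (Turing.TM0.step M) (Turing.TM0.init x)).Dom := hdom
  set b := (StateTransition.eval (Turing.TM0.step M) (Turing.TM0.init x)).get hd with hb
  have hmem : b ∈ StateTransition.eval (Turing.TM0.step M) (Turing.TM0.init x) := Part.get_mem hd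
  obtain ⟨hreach, hnone⟩ := StateTransition.mem_eval.1 hmem
  have hreach' : ∀ c : Turing.TM0.Cfg Γ Λ, StateTransition.Reaches (Turing.TM0.step M)
      (Turing.TM0.init x) c →
      StateTransition.Reaches (Turing.TM0.step (restrictMachine M Ahat)) (Turing.TM0.init x) c := by
    intro c hc
    induction hc with
    | refl => exact Relation.ReflTransGen.refl
    | tail h1 h2 ih =>
      exact Relation.ReflTransGen.tail ih (by rw [key _ h1]; exact h2)
  have hnone' : Turing.TM0.step (restrictMachine M Ahat) b = none := by
    obtain ⟨q, T⟩ := b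
    have : M q T.head = none := by
      simpa [Turing.TM0.step, Option.map_eq_none_iff] using hnone
    simp [Turing.TM0.step, restrictMachine, this]
  have hmem' : b ∈ StateTransition.eval (Turing.TM0.step (restrictMachine M Ahat))
      (Turing.TM0.init x) := StateTransition.mem_eval.2 ⟨hreach' _ hreach, hnone'⟩
  unfold Turing.TM0.eval
  rw [Part.eq_some_iff.2 hmem', Part.eq_some_iff.2 hmem]

lemma indicator_forall_prod {n : ℕ} {β : Type*} (Q : β → Prop) (g : Fin n → β)
    [Decidable (∀ j, Q (g j))] [∀ j, Decidable (Q (g j))] (d : Fin n → β → ℝ≥0∞) :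
    (if ∀ j, Q (g j) then ∏ j, d j (g j) else 0) = ∏ j, if Q (g j) then d j (g j) else 0 := by
  by_cases h : ∀ j, Q (g j)
  · rw [if_pos h]; exact Finset.prod_congr rfl fun j _ => (if_pos (h j)).symm
  · rw [if_neg h]
    push_neg at h
    obtain ⟨j, hj⟩ := h
    refine (Finset.prod_eq_zero (Finset.mem_univ j) ?_).symm
    exact if_neg hj

lemma indicator_coord_prod {n : ℕ} {β : Type*} (i₀ : Fin n) (Q : β → Prop)
    [∀ b : β, Decidable (Q b)] (d : Fin n → β → ℝ≥0∞) (f : Fin n → β) :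
    (if Q (f i₀) then ∏ i, d i (f i) else 0) =
      ∏ i, if i = i₀ then (if Q (f i) then d i (f i) else 0) else d i (f i) := by
  by_cases h : Q (f i₀)
  · rw [if_pos h]
    refine Finset.prod_congr rfl fun i _ => ?_
    by_cases hi : i = i₀
    · subst hi; rw [if_pos rfl, if_pos h]
    · rw [if_neg hi]
  · rw [if_neg h]
    exact (Finset.prod_eq_zero (Finset.mem_univ i₀) (by rw [if_pos rfl, if_neg h])).symm

lemma pmf_pi_mass {β : Type*} (p : PMF β) (m : ℕ) :
    ∑' g : Fin m → β, ∏ j, p (g j) = 1 := by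
  have h := tsum_prod_pi (β := β) m (fun _ b => p b)
  simpa [p.tsum_coe] using h

/-- The product weight on the sample space of `m` samples from each of `D 1, …, D n₀`. -/
noncomputable def wfun {Γ : Type*} (D : ℕ → PMF (List Γ)) (n₀ m : ℕ)
    (xs : Fin n₀ → Fin m → List Γ) : ℝ≥0∞ :=
  ∏ i, ∏ j, D (i.1 + 1) (xs i j)

/-- Theorem 2 (core): let `M` be a Post–Turing machine over finite `Γ`, `Λ` halting on every
input tape in the support of each `D n`, and let `A x` be the set of (state, head-symbol)
pairs visited during the run of `M` on `x`. Then for all `ε, δ ∈ (0,1)` there are `n₀, m` such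
that, drawing `m` independent samples from each of `D_1, …, D_{n₀}` and letting `Ahat` be the
union of the visited sets of the drawn samples, with probability at least `1 - δ` we have:
for every `n ≥ n₀`, the machine restricted to the lookup table `Ahat` computes the same output
as `M` with probability greater than `1 - ε` over `x ∼ D n`. -/
theorem restricted_machine_length_generalizes {Γ Λ : Type*} [Fintype Γ] [Fintype Λ]
    [Inhabited Γ] [Inhabited Λ]
    (M : Turing.TM0.Machine Γ Λ) (D : ℕ → PMF (List Γ))
    (hhalt : ∀ n : ℕ, ∀ x ∈ (D n).support, (Turing.TM0.eval M x).Dom)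
    (A : List Γ → Finset (Λ × Γ))
    (hA : ∀ (x : List Γ) (p : Λ × Γ), p ∈ A x ↔
      ∃ c : Turing.TM0.Cfg Γ Λ, Turing.TM0.Reaches M (Turing.TM0.init x) c ∧
        p = (c.q, c.Tape.head))
    (ε δ : ℝ) (hε : ε ∈ Set.Ioo (0 : ℝ) 1) (hδ : δ ∈ Set.Ioo (0 : ℝ) 1) :
    ∃ n₀ m : ℕ,
      ENNReal.ofReal (1 - δ) ≤
        ∑' xs : Fin n₀ → Fin m → List Γ,
          if ∀ n ≥ n₀, ENNReal.ofReal (1 - ε) <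
              ∑' x, if Turing.TM0.eval
                    (restrictMachine M (Finset.univ.biUnion
                      (fun i : Fin n₀ => Finset.univ.biUnion fun j : Fin m => A (xs i j)))) x =
                  Turing.TM0.eval M x
                then D n x else 0
          then ∏ i, ∏ j, D (i.1 + 1) (xs i j) else 0 := by
  classical
  obtain ⟨hε0, hε1⟩ := hε
  obtain ⟨hδ0, hδ1⟩ := hδ
  -- the finite set of all (state, symbol) pairs ever visited on any support point
  set S : Finset (Λ × Γ) :=
    Finset.univ.filter (fun p => ∃ n, 1 ≤ n ∧ ∃ x, D n x ≠ 0 ∧ p ∈ A x) with hSdef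
  have hchoice : ∀ p ∈ S, ∃ (n : ℕ) (x : List Γ), 1 ≤ n ∧ D n x ≠ 0 ∧ p ∈ A x := by
    intro p hp
    rw [hSdef, Finset.mem_filter] at hp
    obtain ⟨-, n, hn, x, hx, hpx⟩ := hp
    exact ⟨n, x, hn, hx, hpx⟩
  choose! np xp hnp hxp hpA using hchoice
  set n₀ := max 1 (S.sup np) with hn₀def
  have hn₀1 : 1 ≤ n₀ := le_max_left _ _
  have hn₀lt : ∀ p ∈ S, np p - 1 < n₀ := by
    intro p hp
    have h1 : np p ≤ S.sup np := Finset.le_sup hp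
    have h2 : S.sup np ≤ n₀ := le_max_right _ _
    have h3 := hnp p hp
    omega
  set ip : Λ × Γ → Fin n₀ :=
    (fun p => if hp : p ∈ S then ⟨np p - 1, hn₀lt p hp⟩ else ⟨0, hn₀1⟩) with hipdef
  have hip : ∀ p ∈ S, (ip p).1 + 1 = np p := by
    intro p hp
    have h3 := hnp p hp
    simp only [hipdef, dif_pos hp]
    omega
  -- choose m large enough
  set c : Λ × Γ → ℝ≥0∞ := fun p => 1 - D (np p) (xp p) with hcdef
  have hclt : ∀ p ∈ S, c p < 1 := by
    intro p hp
    exact ENNReal.sub_lt_self ENNReal.one_ne_top one_ne_zero (hxp p hp)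
  have htend : Filter.Tendsto (fun m : ℕ => ∑ p ∈ S, c p ^ m) Filter.atTop (nhds 0) := by
    have h := tendsto_finset_sum (f := fun p (m : ℕ) => c p ^ m) S
      (fun p hp => ENNReal.tendsto_pow_atTop_nhds_zero_of_lt_one (hclt p hp))
    simpa using h
  have hδpos : (0 : ℝ≥0∞) < ENNReal.ofReal δ := ENNReal.ofReal_pos.2 hδ0
  obtain ⟨m, hm⟩ := (htend.eventually_lt_const hδpos).exists
  refine ⟨n₀, m, ?_⟩
  -- the good event
  set G : (Fin n₀ → Fin m → List Γ) → Prop :=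
    fun xs => ∀ p ∈ S, ∃ j : Fin m, p ∈ A (xs (ip p) j) with hGdef
  -- good event implies the desired property
  have hGP : ∀ xs : Fin n₀ → Fin m → List Γ, G xs →
      (∀ n ≥ n₀, ENNReal.ofReal (1 - ε) <
        ∑' x, if Turing.TM0.eval
              (restrictMachine M (Finset.univ.biUnion
                (fun i : Fin n₀ => Finset.univ.biUnion fun j : Fin m => A (xs i j)))) x =
            Turing.TM0.eval M x
          then D n x else 0) := by
    intro xs hG n hn
    have heval : ∀ x : List Γ, D n x ≠ 0 →
        Turing.TM0.eval (restrictMachine M (Finset.univ.biUnion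
          (fun i : Fin n₀ => Finset.univ.biUnion fun j : Fin m => A (xs i j)))) x =
          Turing.TM0.eval M x := by
      intro x hx
      refine eval_restrict_eq M _ x (hhalt n x (((D n).mem_support_iff x).2 hx)) ?_
      intro cfg hcfg
      have hmemA : (cfg.q, cfg.Tape.head) ∈ A x := (hA x _).2 ⟨cfg, hcfg, rfl⟩
      have hmemS : (cfg.q, cfg.Tape.head) ∈ S := by
        rw [hSdef, Finset.mem_filter]
        exact ⟨Finset.mem_univ _, n, le_trans hn₀1 hn, x, hx, hmemA⟩
      obtain ⟨j, hj⟩ := hG _ hmemS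
      exact Finset.mem_biUnion.2 ⟨ip _, Finset.mem_univ _,
        Finset.mem_biUnion.2 ⟨j, Finset.mem_univ _, hj⟩⟩
    have hone : (∑' x, if Turing.TM0.eval
          (restrictMachine M (Finset.univ.biUnion
            (fun i : Fin n₀ => Finset.univ.biUnion fun j : Fin m => A (xs i j)))) x =
          Turing.TM0.eval M x then D n x else 0) = 1 := by
      rw [← (D n).tsum_coe]
      refine tsum_congr fun x => ?_
      by_cases hx : D n x = 0
      · simp [hx]
      · rw [if_pos (heval x hx)]
    rw [hone]
    exact ENNReal.ofReal_lt_one.2 (by linarith)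
  -- total mass is one
  have hrow : ∀ k : ℕ, ∑' g : Fin m → List Γ, ∏ j, D k (g j) = 1 :=
    fun k => pmf_pi_mass (D k) m
  have htot : ∑' xs : Fin n₀ → Fin m → List Γ, wfun D n₀ m xs = 1 := by
    have h := tsum_prod_pi (β := Fin m → List Γ) n₀
      (fun i g => ∏ j, D (i.1 + 1) (g j))
    simpa [wfun, hrow] using h
  -- splitting into good and bad parts
  have hsplit : (∑' xs, if G xs then wfun D n₀ m xs else 0) +
      (∑' xs, if ¬ G xs then wfun D n₀ m xs else 0) = 1 := by
    rw [← ENNReal.tsum_add, ← htot]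
    refine tsum_congr fun xs => ?_
    by_cases h : G xs
    · rw [if_pos h, if_neg (not_not_intro h), add_zero]
    · rw [if_neg h, if_pos h, zero_add]
  -- bound on each bad event
  have hbadp : ∀ p ∈ S,
      (∑' xs : Fin n₀ → Fin m → List Γ,
        if (∀ j : Fin m, p ∉ A (xs (ip p) j)) then wfun D n₀ m xs else 0) ≤ c p ^ m := by
    intro p hp
    set u : Fin n₀ → (Fin m → List Γ) → ℝ≥0∞ :=
      fun i g => if i = ip p then
          (if (∀ j : Fin m, p ∉ A (g j)) then ∏ j, D (i.1 + 1) (g j) else 0)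
        else ∏ j, D (i.1 + 1) (g j) with hu
    have h1 : ∀ xs : Fin n₀ → Fin m → List Γ,
        (if (∀ j : Fin m, p ∉ A (xs (ip p) j)) then wfun D n₀ m xs else 0) =
          ∏ i, u i (xs i) := by
      intro xs
      have h := indicator_coord_prod (ip p) (fun g : Fin m → List Γ => ∀ j, p ∉ A (g j))
        (fun i g => ∏ j, D (i.1 + 1) (g j)) xs
      rw [hu]
      exact h
    rw [tsum_congr h1, tsum_prod_pi n₀ u]
    rw [Finset.prod_eq_single (ip p)
      (fun i _ hi => by rw [hu]; simp only [if_neg hi]; exact hrow _)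
      (fun h => absurd (Finset.mem_univ _) h)]
    set v : Fin m → List Γ → ℝ≥0∞ :=
      fun _ x => if p ∉ A x then D (np p) x else 0 with hv
    have h2 : ∀ g : Fin m → List Γ, u (ip p) g = ∏ j, v j (g j) := by
      intro g
      rw [hu, hv]
      simp only [if_pos rfl, hip p hp]
      exact indicator_forall_prod (fun x => p ∉ A x) g (fun _ x => D (np p) x)
    rw [tsum_congr h2, tsum_prod_pi m v, hv, Finset.prod_const, Finset.card_univ,
      Fintype.card_fin]
    have hcp : c p = 1 - D (np p) (xp p) := rfl
    rw [hcp]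
    refine pow_le_pow_left₀ zero_le ?_ m
    have hadd : (∑' x, if p ∈ A x then D (np p) x else 0) +
        (∑' x, if p ∉ A x then D (np p) x else 0) = 1 := by
      rw [← ENNReal.tsum_add, ← (D (np p)).tsum_coe]
      refine tsum_congr fun x => ?_
      by_cases hx : p ∈ A x
      · rw [if_pos hx, if_neg (not_not_intro hx), add_zero]
      · rw [if_neg hx, if_pos hx, zero_add]
    have hle1 : (∑' x, if p ∈ A x then D (np p) x else 0) ≤ 1 :=
      le_trans le_self_add (le_of_eq hadd)
    have ht : (∑' x, if p ∉ A x then D (np p) x else 0) =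
        1 - (∑' x, if p ∈ A x then D (np p) x else 0) := by
      refine ENNReal.eq_sub_of_add_eq (ne_top_of_le_ne_top ENNReal.one_ne_top hle1) ?_
      rw [add_comm]; exact hadd
    rw [ht]
    refine tsub_le_tsub_left ?_ 1
    have h3 := ENNReal.le_tsum (f := fun x => if p ∈ A x then D (np p) x else 0) (xp p)
    rwa [if_pos (hpA p hp)] at h3
  -- union bound
  have hbad : (∑' xs, if ¬ G xs then wfun D n₀ m xs else 0) ≤ ∑ p ∈ S, c p ^ m := by
    calc (∑' xs, if ¬ G xs then wfun D n₀ m xs else 0)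
        ≤ ∑' xs : Fin n₀ → Fin m → List Γ, ∑ p ∈ S,
            (if (∀ j : Fin m, p ∉ A (xs (ip p) j)) then wfun D n₀ m xs else 0) := by
          refine ENNReal.tsum_le_tsum fun xs => ?_
          by_cases h : G xs
          · rw [if_neg (not_not_intro h)]
            exact zero_le
          · rw [if_pos h]
            have h' : ∃ p ∈ S, ∀ j : Fin m, p ∉ A (xs (ip p) j) := by
              by_contra hc
              push_neg at hc
              exact h hc
            obtain ⟨p, hpS, hpbad⟩ := h'
            calc wfun D n₀ m xs
                = (if (∀ j : Fin m, p ∉ A (xs (ip p) j)) then wfun D n₀ m xs else 0) :=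
                  (if_pos hpbad).symm
              _ ≤ _ := Finset.single_le_sum
                  (f := fun q => if (∀ j : Fin m, q ∉ A (xs (ip q) j))
                    then wfun D n₀ m xs else 0)
                  (fun q _ => zero_le) hpS
      _ = ∑ p ∈ S, ∑' xs : Fin n₀ → Fin m → List Γ,
            (if (∀ j : Fin m, p ∉ A (xs (ip p) j)) then wfun D n₀ m xs else 0) :=
          Summable.tsum_finsetSum fun p _ => ENNReal.summable
      _ ≤ ∑ p ∈ S, c p ^ m := Finset.sum_le_sum hbadp
  -- probability of the good event
  have hb_le : (∑' xs, if ¬ G xs then wfun D n₀ m xs else 0) ≤ ENNReal.ofReal δ :=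
    le_trans hbad (le_of_lt hm)
  have hbne : (∑' xs, if ¬ G xs then wfun D n₀ m xs else 0) ≠ ⊤ :=
    ne_top_of_le_ne_top ENNReal.ofReal_ne_top hb_le
  have hg_eq : (∑' xs, if G xs then wfun D n₀ m xs else 0) =
      1 - (∑' xs, if ¬ G xs then wfun D n₀ m xs else 0) :=
    ENNReal.eq_sub_of_add_eq hbne hsplit
  have hgood : ENNReal.ofReal (1 - δ) ≤ ∑' xs, if G xs then wfun D n₀ m xs else 0 := by
    rw [hg_eq]
    calc ENNReal.ofReal (1 - δ) = 1 - ENNReal.ofReal δ := by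
          rw [ENNReal.ofReal_sub _ hδ0.le, ENNReal.ofReal_one]
      _ ≤ 1 - (∑' xs, if ¬ G xs then wfun D n₀ m xs else 0) := tsub_le_tsub_left hb_le 1
  refine le_trans hgood (ENNReal.tsum_le_tsum fun xs => ?_)
  by_cases h : G xs
  · rw [if_pos h, if_pos (hGP xs h)]
    exact le_of_eq rfl
  · rw [if_neg h]
    exact zero_le
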